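/- Let M be a loopless matroid with finite ground set E, rank function r, and rank r(M) = r(E); let 0 < q₀ < 1, and let v : E → ℝ satisfy −1 − √(1−q₀) < v_e < −q₀ for all e ∈ E. Then for every integer 0 ≤ ℓ ≤ r(M), the ℓ-th derivative of the function q ↦ q^{r(M)} Z̃_M(q,v), evaluated at q = q₀, satisfies (−1)^{r(M)−ℓ} · (d^ℓ/dq^ℓ)(q^{r(M)} Z̃_M(q,v))|_{q=q₀} > 0. -/

import Mathlib

open Finset

/-- A matroid with ground set the finite type `α`, presented by its rank function
(normalized, monotone, submodular). -/
structure RankMatroid (α : Type*) [DecidableEq α] where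
  r : Finset α → ℕ
  r_le_card : ∀ A : Finset α, r A ≤ A.card
  mono : ∀ ⦃A B : Finset α⦄, A ⊆ B → r A ≤ r B
  submodular : ∀ A B : Finset α, r (A ∪ B) + r (A ∩ B) ≤ r A + r B

/-- The multivariate Tutte polynomial of a matroid:
`Z̃_M(q,v) = ∑_{A ⊆ E} q^{-r(A)} ∏_{e ∈ A} v_e`. -/
noncomputable def matZ {α : Type*} [DecidableEq α] [Fintype α] (M : RankMatroid α)
    (q : ℝ) (v : α → ℝ) : ℝ :=
  ∑ A ∈ (Finset.univ : Finset α).powerset, q ^ (-(M.r A : ℤ)) * ∏ e ∈ A, v e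

namespace RankMatroidAux

open Polynomial

variable {α : Type*} [DecidableEq α]

lemma r_empty (M : RankMatroid α) : M.r ∅ = 0 :=
  Nat.le_zero.mp (by simpa using M.r_le_card ∅)

lemma r_singleton_le (M : RankMatroid α) (e : α) : M.r {e} ≤ 1 := by
  simpa using M.r_le_card {e}

lemma r_insert_le (M : RankMatroid α) (e : α) (A : Finset α) :
    M.r (insert e A) ≤ M.r A + 1 := by
  have h := M.submodular A {e}
  have h1 := r_singleton_le M e
  have h2 : A ∪ {e} = insert e A := by
    rw [Finset.union_comm, ← Finset.insert_eq]
  rw [h2] at h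
  omega

/-- If `f` is parallel to `e` (`r {e,f} = 1`, `r {e} = 1`) and `e ∈ S`, then
inserting `f` does not change the rank of `S`. -/
lemma r_insert_parallel (M : RankMatroid α) {e f : α} (he : M.r {e} = 1)
    (hef : M.r {e, f} = 1) {S : Finset α} (heS : e ∈ S) :
    M.r (insert f S) = M.r S := by
  have h := M.submodular S {e, f}
  have h1 : S ∪ {e, f} = insert f S := by
    ext x
    simp only [Finset.mem_union, Finset.mem_insert, Finset.mem_singleton]
    constructor
    · rintro (hx | rfl | rfl)
      · exact Or.inr hx
      · exact Or.inr heS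
      · exact Or.inl rfl
    · rintro (rfl | hx)
      · exact Or.inr (Or.inr rfl)
      · exact Or.inl hx
  have h2 : ({e} : Finset α) ⊆ S ∩ {e, f} := by
    rw [Finset.singleton_subset_iff, Finset.mem_inter]
    exact ⟨heS, Finset.mem_insert_self e {f}⟩
  have h3 : 1 ≤ M.r (S ∩ {e, f}) := he ▸ M.mono h2
  have h4 : M.r S ≤ M.r (insert f S) := M.mono (Finset.subset_insert _ _)
  rw [h1, hef] at h
  omega

/-- Contraction of a matroid by a non-loop element `e`. -/
def contr (M : RankMatroid α) (e : α) (he : M.r {e} = 1) : RankMatroid α where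
  r A := M.r (insert e A) - 1
  r_le_card A := by
    show M.r (insert e A) - 1 ≤ A.card
    have h1 := r_insert_le M e A
    have h2 := M.r_le_card A
    omega
  mono A B hAB := by
    show M.r (insert e A) - 1 ≤ M.r (insert e B) - 1
    have := M.mono (Finset.insert_subset_insert e hAB)
    omega
  submodular A B := by
    show M.r (insert e (A ∪ B)) - 1 + (M.r (insert e (A ∩ B)) - 1)
      ≤ M.r (insert e A) - 1 + (M.r (insert e B) - 1)
    have h := M.submodular (insert e A) (insert e B)
    have h1 : insert e A ∪ insert e B = insert e (A ∪ B) := by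
      rw [Finset.insert_union, Finset.union_insert, Finset.insert_idem]
    have h2 : insert e A ∩ insert e B = insert e (A ∩ B) :=
      (Finset.insert_inter_distrib A B e).symm
    rw [h1, h2] at h
    have g1 : 1 ≤ M.r (insert e (A ∪ B)) :=
      he ▸ M.mono (Finset.singleton_subset_iff.mpr (Finset.mem_insert_self e _))
    have g2 : 1 ≤ M.r (insert e (A ∩ B)) :=
      he ▸ M.mono (Finset.singleton_subset_iff.mpr (Finset.mem_insert_self e _))
    have g3 : 1 ≤ M.r (insert e A) :=
      he ▸ M.mono (Finset.singleton_subset_iff.mpr (Finset.mem_insert_self e _))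
    have g4 : 1 ≤ M.r (insert e B) :=
      he ▸ M.mono (Finset.singleton_subset_iff.mpr (Finset.mem_insert_self e _))
    omega

lemma contr_r (M : RankMatroid α) (e : α) (he : M.r {e} = 1) (A : Finset α) :
    (contr M e he).r A = M.r (insert e A) - 1 := rfl

/-- The polynomial `q^{r(E)} Z̃(q,v)` restricted to ground set `E`. -/
noncomputable def PT (M : RankMatroid α) (E : Finset α) (v : α → ℝ) : Polynomial ℝ :=
  ∑ A ∈ E.powerset, Polynomial.C (∏ e ∈ A, v e) * Polynomial.X ^ (M.r E - M.r A)

lemma PT_natDegree_le (M : RankMatroid α) (E : Finset α) (v : α → ℝ) :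
    (PT M E v).natDegree ≤ M.r E := by
  refine natDegree_sum_le_of_forall_le _ _ fun A hA => ?_
  refine (natDegree_C_mul_le _ _).trans ((natDegree_X_pow_le _).trans ?_)
  omega

lemma PT_empty (M : RankMatroid α) (v : α → ℝ) : PT M ∅ v = 1 := by
  simp [PT]

lemma iterate_derivative_add' (k : ℕ) (p q : Polynomial ℝ) :
    derivative^[k] (p + q) = derivative^[k] p + derivative^[k] q := by
  induction k with
  | zero => simp
  | succ n ih =>
    rw [Function.iterate_succ_apply', Function.iterate_succ_apply',
      Function.iterate_succ_apply', ih, derivative_add]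

lemma iterate_derivative_linear_mul (a : ℝ) (p : Polynomial ℝ) (ℓ : ℕ) :
    derivative^[ℓ + 1] ((Polynomial.X + Polynomial.C a) * p)
      = (Polynomial.X + Polynomial.C a) * derivative^[ℓ + 1] p
        + ((ℓ : Polynomial ℝ) + 1) * derivative^[ℓ] p := by
  induction ℓ with
  | zero =>
    simp only [zero_add, Function.iterate_one, Nat.cast_zero, derivative_mul,
      derivative_add, derivative_X, derivative_C, add_zero, Function.iterate_zero_apply]
    ring
  | succ n ih =>
    rw [Function.iterate_succ_apply' derivative (n + 1) ((Polynomial.X + Polynomial.C a) * p),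
      ih, derivative_add, derivative_mul, derivative_mul]
    simp only [derivative_add, derivative_X, derivative_C, derivative_natCast,
      derivative_one, ← Function.iterate_succ_apply' derivative]
    push_cast
    ring

/-- The deletion–contraction splitting of `PT`. -/
lemma PT_split (M : RankMatroid α) {E : Finset α} {e : α} (heE : e ∈ E)
    (he : M.r {e} = 1) (v : α → ℝ) :
    PT M E v = Polynomial.X ^ (M.r E - M.r (E.erase e)) * PT M (E.erase e) v
      + Polynomial.C (v e) * PT (contr M e he) (E.erase e) v := by
  have hE : E = insert e (E.erase e) := (Finset.insert_erase heE).symm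
  rw [PT]
  conv_lhs => rw [hE]
  rw [Finset.sum_powerset_insert (Finset.notMem_erase e E), ← hE]
  congr 1
  · rw [PT, Finset.mul_sum]
    refine Finset.sum_congr rfl fun A hA => ?_
    have hA' : A ⊆ E.erase e := Finset.mem_powerset.mp hA
    have h1 : M.r A ≤ M.r (E.erase e) := M.mono hA'
    have h2 : M.r (E.erase e) ≤ M.r E := M.mono (Finset.erase_subset e E)
    rw [show M.r E - M.r A
        = (M.r E - M.r (E.erase e)) + (M.r (E.erase e) - M.r A) from by omega,
      pow_add]
    ring
  · rw [PT, Finset.mul_sum]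
    refine Finset.sum_congr rfl fun A hA => ?_
    have hA' : A ⊆ E.erase e := Finset.mem_powerset.mp hA
    have heA : e ∉ A := fun h => Finset.notMem_erase e E (hA' h)
    have hAE : insert e A ⊆ E := by
      rw [hE]; exact Finset.insert_subset_insert e hA'
    have h1 : 1 ≤ M.r (insert e A) :=
      he ▸ M.mono (Finset.singleton_subset_iff.mpr (Finset.mem_insert_self e A))
    have h2 : M.r (insert e A) ≤ M.r E := M.mono hAE
    rw [Finset.prod_insert heA, contr_r, contr_r, Finset.insert_erase heE,
      show M.r E - 1 - (M.r (insert e A) - 1) = M.r E - M.r (insert e A) from by omega,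
      Polynomial.C_mul]
    ring

/-- Merging a pair of parallel elements. -/
lemma PT_parallel (M : RankMatroid α) {E : Finset α} {e f : α} (heE : e ∈ E)
    (hfE : f ∈ E) (hef : e ≠ f) (he : M.r {e} = 1) (hf : M.r {f} = 1)
    (hpar : M.r {e, f} = 1) (v : α → ℝ) :
    PT M E v = PT M (E.erase f) (Function.update v e ((1 + v e) * (1 + v f) - 1)) := by
  set w := (1 + v e) * (1 + v f) - 1 with hw
  set v' := Function.update v e w with hv'
  have he1 : e ∈ E.erase f := Finset.mem_erase.mpr ⟨hef, heE⟩
  have hf1 : f ∉ E.erase f := Finset.notMem_erase f E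
  have he2 : e ∉ (E.erase f).erase e := Finset.notMem_erase e _
  have hf2 : f ∉ (E.erase f).erase e := fun h => hf1 (Finset.mem_of_mem_erase h)
  have hE : E = insert f (E.erase f) := (Finset.insert_erase hfE).symm
  have hE1 : E.erase f = insert e ((E.erase f).erase e) := (Finset.insert_erase he1).symm
  have hrE1 : M.r (E.erase f) = M.r E := by
    have h := r_insert_parallel M he hpar he1
    rw [Finset.insert_erase hfE] at h
    exact h.symm
  have split4 : ∀ g : Finset α → Polynomial ℝ, ∑ A ∈ E.powerset, g A
      = ∑ B ∈ ((E.erase f).erase e).powerset,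
          (g B + g (insert e B) + (g (insert f B) + g (insert f (insert e B)))) := by
    intro g
    conv_lhs => rw [hE]
    rw [Finset.sum_powerset_insert hf1]
    conv_lhs => rw [hE1]
    rw [Finset.sum_powerset_insert he2, Finset.sum_powerset_insert he2,
      ← Finset.sum_add_distrib, ← Finset.sum_add_distrib, ← Finset.sum_add_distrib]
  have split2 : ∀ g : Finset α → Polynomial ℝ, ∑ A ∈ (E.erase f).powerset, g A
      = ∑ B ∈ ((E.erase f).erase e).powerset, (g B + g (insert e B)) := by
    intro g
    conv_lhs => rw [hE1]
    rw [Finset.sum_powerset_insert he2, ← Finset.sum_add_distrib]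
  rw [PT, PT, split4, split2]
  refine Finset.sum_congr rfl fun B hB => ?_
  have hB' : B ⊆ (E.erase f).erase e := Finset.mem_powerset.mp hB
  have heB : e ∉ B := fun h => he2 (hB' h)
  have hfB : f ∉ B := fun h => hf2 (hB' h)
  have hfeB : f ∉ insert e B := by
    simp only [Finset.mem_insert]
    rintro (rfl | h)
    · exact hef rfl
    · exact hfB h
  -- ranks
  have hfe : M.r (insert f (insert e B)) = M.r (insert e B) :=
    r_insert_parallel M he hpar (Finset.mem_insert_self e B)
  have hfB' : M.r (insert f B) = M.r (insert e B) := by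
    have hpar' : M.r {f, e} = 1 := by rw [Finset.pair_comm]; exact hpar
    have h := r_insert_parallel M hf hpar' (Finset.mem_insert_self f B)
    rw [Finset.insert_comm] at h
    rw [← h, hfe]
  -- products
  have hprodB : ∏ x ∈ B, v' x = ∏ x ∈ B, v x :=
    Finset.prod_congr rfl fun x hx =>
      Function.update_of_ne (ne_of_mem_of_not_mem hx heB) _ _
  have hprodeB : ∏ x ∈ insert e B, v' x = w * ∏ x ∈ B, v x := by
    rw [Finset.prod_insert heB, hprodB, hv', Function.update_self]
  rw [Finset.prod_insert heB, Finset.prod_insert hfB, Finset.prod_insert hfeB,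
    Finset.prod_insert heB, hprodB, hprodeB, hfe, hfB', hrE1]
  have hC : Polynomial.C (v e * ∏ x ∈ B, v x) + Polynomial.C (v f * ∏ x ∈ B, v x)
      + Polynomial.C (v f * (v e * ∏ x ∈ B, v x))
      = Polynomial.C (w * ∏ x ∈ B, v x) := by
    rw [← Polynomial.C_add, ← Polynomial.C_add]
    congr 1
    rw [hw]; ring
  linear_combination (Polynomial.X : Polynomial ℝ) ^ (M.r E - M.r (insert e B)) * hC

/-- The main induction: sign of the derivatives of `PT`. -/
lemma key (q₀ : ℝ) (hq0 : 0 < q₀) (hq1 : q₀ < 1) [Fintype α] :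
    ∀ (n : ℕ) (E : Finset α) (M : RankMatroid α) (v : α → ℝ), E.card = n →
      (∀ x ∈ E, M.r {x} = 1) →
      (∀ x ∈ E, -1 - Real.sqrt (1 - q₀) < v x ∧ v x < -q₀) →
      ∀ ℓ : ℕ, ℓ ≤ M.r E →
        0 < (-1 : ℝ) ^ (M.r E - ℓ) * (derivative^[ℓ] (PT M E v)).eval q₀ := by
  intro n
  induction n with
  | zero =>
    intro E M v hcard _ _ ℓ hℓ
    have hE : E = ∅ := Finset.card_eq_zero.mp hcard
    subst hE
    rw [r_empty] at hℓ ⊢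
    interval_cases ℓ
    simp [PT_empty]
  | succ n ih =>
    intro E M v hcard hloop hv ℓ hℓ
    obtain ⟨e, heE⟩ : E.Nonempty := Finset.card_pos.mp (by omega)
    have he := hloop e heE
    set s := Real.sqrt (1 - q₀) with hs
    have hs0 : 0 < s := Real.sqrt_pos.mpr (by linarith)
    have hssq : s ^ 2 = 1 - q₀ := Real.sq_sqrt (by linarith)
    have hs1 : s < 1 := by nlinarith
    have habs : ∀ x ∈ E, -s < 1 + v x ∧ 1 + v x < s := by
      intro x hx
      obtain ⟨hl, hr⟩ := hv x hx
      constructor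
      · rw [hs] at hl ⊢; linarith
      · nlinarith
    by_cases hpar : ∃ f ∈ E, f ≠ e ∧ M.r {e, f} = 1
    · obtain ⟨f, hfE, hfe, hef1⟩ := hpar
      have hf := hloop f hfE
      rw [PT_parallel M heE hfE hfe.symm he hf hef1 v]
      set w := (1 + v e) * (1 + v f) - 1 with hwdef
      set v' := Function.update v e w with hv'def
      have hrE1 : M.r (E.erase f) = M.r E := by
        have h := r_insert_parallel M he hef1 (Finset.mem_erase.mpr ⟨hfe.symm, heE⟩)
        rw [Finset.insert_erase hfE] at h
        exact h.symm
      rw [← hrE1]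
      refine ih (E.erase f) M v' ?_ ?_ ?_ ℓ (by omega)
      · rw [Finset.card_erase_of_mem hfE, hcard]
        omega
      · exact fun x hx => hloop x (Finset.mem_of_mem_erase hx)
      · intro x hx
        by_cases hxe : x = e
        · subst hxe
          obtain ⟨hel, her⟩ := habs x heE
          obtain ⟨hfl, hfr⟩ := habs f hfE
          have hww : v' x = w := by rw [hv'def, Function.update_self]
          rw [hww]
          have h1 : -(s ^ 2) < (1 + v x) * (1 + v f) ∧ (1 + v x) * (1 + v f) < s ^ 2 := by
            constructor <;> nlinarith
          constructor
          · rw [hwdef]; nlinarith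
          · rw [hwdef]; nlinarith
        · have : v' x = v x := Function.update_of_ne hxe _ _
          rw [this]
          exact hv x (Finset.mem_of_mem_erase hx)
    · push_neg at hpar
      have hloop' : ∀ x ∈ E.erase e, M.r {x} = 1 :=
        fun x hx => hloop x (Finset.mem_of_mem_erase hx)
      have hv' : ∀ x ∈ E.erase e, -1 - Real.sqrt (1 - q₀) < v x ∧ v x < -q₀ :=
        fun x hx => hv x (Finset.mem_of_mem_erase hx)
      have hcard' : (E.erase e).card = n := by
        rw [Finset.card_erase_of_mem heE, hcard]
        omega
      have hsub : M.r E ≤ M.r (E.erase e) + 1 := by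
        have h := r_insert_le M e (E.erase e)
        rwa [Finset.insert_erase heE] at h
      have hmono : M.r (E.erase e) ≤ M.r E := M.mono (Finset.erase_subset e E)
      have hge1 : 1 ≤ M.r E := he ▸ M.mono (Finset.singleton_subset_iff.mpr heE)
      have hcr : (contr M e he).r (E.erase e) = M.r E - 1 := by
        rw [contr_r, Finset.insert_erase heE]
      have hcloop : ∀ x ∈ E.erase e, (contr M e he).r {x} = 1 := by
        intro x hx
        have hxe : x ≠ e := (Finset.mem_erase.mp hx).1
        have hxE : x ∈ E := Finset.mem_of_mem_erase hx
        have hne := hpar x hxE hxe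
        have hle : M.r {e, x} ≤ 2 := by
          refine (M.r_le_card _).trans ?_
          refine (Finset.card_insert_le e {x}).trans ?_
          simp
        have hge : 1 ≤ M.r {e, x} := by
          refine le_trans ?_ (M.mono (Finset.singleton_subset_iff.mpr
            (Finset.mem_insert_self e {x})))
          omega
        rw [contr_r]
        have : M.r (insert e {x}) = M.r {e, x} := rfl
        omega
      have hqv : q₀ + v e < 0 := by have := (hv e heE).2; linarith
      have hveneg : 0 < -v e := by have := (hv e heE).2; linarith
      rw [PT_split M heE he v]
      by_cases hcol : M.r (E.erase e) = M.r E
      · -- non-coloop case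
        rw [show M.r E - M.r (E.erase e) = 0 from by omega, pow_zero, one_mul,
          iterate_derivative_add', Polynomial.iterate_derivative_C_mul,
          Polynomial.eval_add, Polynomial.eval_mul, Polynomial.eval_C]
        set E1 := (derivative^[ℓ] (PT M (E.erase e) v)).eval q₀ with hE1def
        set E2 := (derivative^[ℓ] (PT (contr M e he) (E.erase e) v)).eval q₀ with hE2def
        have h1 : 0 < (-1 : ℝ) ^ (M.r E - ℓ) * E1 := by
          have h := ih (E.erase e) M v hcard' hloop' hv' ℓ (by omega)
          rwa [hcol] at h
        by_cases hlt : ℓ < M.r E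
        · have h2 : 0 < (-1 : ℝ) ^ (M.r E - 1 - ℓ) * E2 := by
            have h := ih (E.erase e) (contr M e he) v hcard' hcloop hv' ℓ (by omega)
            rwa [hcr] at h
          have hA : ((-1 : ℝ)) ^ (M.r E - ℓ) = -(-1 : ℝ) ^ (M.r E - 1 - ℓ) := by
            rw [show M.r E - ℓ = (M.r E - 1 - ℓ) + 1 from by omega, pow_succ]
            ring
          have h3 : 0 < (-v e) * ((-1 : ℝ) ^ (M.r E - 1 - ℓ) * E2) := mul_pos hveneg h2
          rw [hA] at h1 ⊢
          nlinarith [h1, h3]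
        · have hℓE : ℓ = M.r E := by omega
          have hz : derivative^[ℓ] (PT (contr M e he) (E.erase e) v) = 0 := by
            refine Polynomial.iterate_derivative_eq_zero ?_
            calc (PT (contr M e he) (E.erase e) v).natDegree
                ≤ (contr M e he).r (E.erase e) := PT_natDegree_le _ _ _
              _ < ℓ := by omega
          rw [hE2def, hz]
          simp only [Polynomial.eval_zero, mul_zero, add_zero]
          exact h1
      · -- coloop case
        have hre : M.r (E.erase e) = M.r E - 1 := by omega
        have hPT2 : PT (contr M e he) (E.erase e) v = PT M (E.erase e) v := by
          unfold PT
          refine Finset.sum_congr rfl fun A hA => ?_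
          have hA' : A ⊆ E.erase e := Finset.mem_powerset.mp hA
          have h1 : M.r (insert e A) ≤ M.r A + 1 := r_insert_le M e A
          have hu : insert e A ∪ E.erase e = E := by
            ext x
            simp only [Finset.mem_union, Finset.mem_insert, Finset.mem_erase]
            constructor
            · rintro ((rfl | hx) | ⟨-, hx⟩)
              · exact heE
              · exact Finset.mem_of_mem_erase (hA' hx)
              · exact hx
            · intro hx
              by_cases hxe : x = e
              · exact Or.inl (Or.inl hxe)
              · exact Or.inr ⟨hxe, hx⟩
          have hi : insert e A ∩ E.erase e = A := by
            ext x
            simp only [Finset.mem_inter, Finset.mem_insert, Finset.mem_erase]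
            constructor
            · rintro ⟨rfl | hx, hne, -⟩
              · exact absurd rfl hne
              · exact hx
            · intro hx
              exact ⟨Or.inr hx, (Finset.mem_erase.mp (hA' hx)).1,
                Finset.mem_of_mem_erase (hA' hx)⟩
          have hsm := M.submodular (insert e A) (E.erase e)
          rw [hu, hi] at hsm
          have h2 : M.r A + 1 ≤ M.r (insert e A) := by omega
          have hrw : (contr M e he).r (E.erase e) - (contr M e he).r A
              = M.r (E.erase e) - M.r A := by
            rw [contr_r, contr_r, Finset.insert_erase heE]
            omega
          rw [hrw]
        rw [hPT2, show M.r E - M.r (E.erase e) = 1 from by omega, pow_one,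
          show Polynomial.X * PT M (E.erase e) v
              + Polynomial.C (v e) * PT M (E.erase e) v
            = (Polynomial.X + Polynomial.C (v e)) * PT M (E.erase e) v from by ring]
        cases ℓ with
        | zero =>
          have h1 : 0 < (-1 : ℝ) ^ (M.r E - 1 - 0) * (PT M (E.erase e) v).eval q₀ := by
            have h := ih (E.erase e) M v hcard' hloop' hv' 0 (Nat.zero_le _)
            rwa [hre] at h
          have hA : ((-1 : ℝ)) ^ (M.r E - 0) = -(-1 : ℝ) ^ (M.r E - 1 - 0) := by
            rw [show M.r E - 0 = (M.r E - 1 - 0) + 1 from by omega, pow_succ]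
            ring
          have h3 : 0 < (-(q₀ + v e)) * ((-1 : ℝ) ^ (M.r E - 1 - 0)
              * (PT M (E.erase e) v).eval q₀) := mul_pos (by linarith) h1
          rw [hA]
          simp only [Function.iterate_zero_apply, Polynomial.eval_mul, Polynomial.eval_add,
            Polynomial.eval_X, Polynomial.eval_C]
          nlinarith [h3]
        | succ ℓ' =>
          rw [iterate_derivative_linear_mul (v e) (PT M (E.erase e) v) ℓ',
            Polynomial.eval_add, Polynomial.eval_mul, Polynomial.eval_mul,
            Polynomial.eval_add, Polynomial.eval_X, Polynomial.eval_C,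
            Polynomial.eval_add, Polynomial.eval_natCast, Polynomial.eval_one]
          set E1 := (derivative^[ℓ' + 1] (PT M (E.erase e) v)).eval q₀ with hE1def
          set E0 := (derivative^[ℓ'] (PT M (E.erase e) v)).eval q₀ with hE0def
          have h2 : 0 < (-1 : ℝ) ^ (M.r E - (ℓ' + 1)) * E0 := by
            have h := ih (E.erase e) M v hcard' hloop' hv' ℓ' (by omega)
            rwa [hre, show M.r E - 1 - ℓ' = M.r E - (ℓ' + 1) from by omega] at h
          have hc0 : (0 : ℝ) < (ℓ' : ℝ) + 1 := by positivity
          have h2c : 0 < ((ℓ' : ℝ) + 1) * ((-1 : ℝ) ^ (M.r E - (ℓ' + 1)) * E0) :=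
            mul_pos hc0 h2
          by_cases hlt : ℓ' + 1 ≤ M.r E - 1
          · have h1 : 0 < (-1 : ℝ) ^ (M.r E - 1 - (ℓ' + 1)) * E1 := by
              have h := ih (E.erase e) M v hcard' hloop' hv' (ℓ' + 1) (by omega)
              rwa [hre] at h
            have h3 : 0 < (-(q₀ + v e)) * ((-1 : ℝ) ^ (M.r E - 1 - (ℓ' + 1)) * E1) :=
              mul_pos (by linarith) h1
            have hA : ((-1 : ℝ)) ^ (M.r E - (ℓ' + 1))
                = -(-1 : ℝ) ^ (M.r E - 1 - (ℓ' + 1)) := by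
              rw [show M.r E - (ℓ' + 1) = (M.r E - 1 - (ℓ' + 1)) + 1 from by omega, pow_succ]
              ring
            rw [hA] at h2c ⊢
            nlinarith [h3, h2c]
          · have hℓE : ℓ' + 1 = M.r E := by omega
            have hz : derivative^[ℓ' + 1] (PT M (E.erase e) v) = 0 := by
              refine Polynomial.iterate_derivative_eq_zero ?_
              calc (PT M (E.erase e) v).natDegree
                  ≤ M.r (E.erase e) := PT_natDegree_le _ _ _
                _ < ℓ' + 1 := by omega
            rw [hE1def, hz]
            simp only [Polynomial.eval_zero, mul_zero, zero_add]
            rw [show M.r E - (ℓ' + 1) = 0 from by omega] at h2c ⊢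
            simp only [pow_zero, one_mul] at h2c ⊢
            linarith

lemma iteratedDeriv_polynomial (p : Polynomial ℝ) (ℓ : ℕ) :
    iteratedDeriv ℓ (fun q : ℝ => p.eval q) = fun q => (derivative^[ℓ] p).eval q := by
  induction ℓ generalizing p with
  | zero => simp
  | succ n ihn =>
    rw [iteratedDeriv_succ', Function.iterate_succ_apply]
    rw [show deriv (fun q : ℝ => p.eval q) = fun q => (derivative p).eval q from
      funext fun x => Polynomial.deriv p]
    exact ihn (derivative p)

end RankMatroidAux

open RankMatroidAux Polynomial in
/-- Let `M` be a loopless matroid (every singleton is independent) of rank `r(M)`,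
let `0 < q₀ < 1`, and suppose `-1 - √(1-q₀) < v_e < -q₀` for all elements `e`.
Then for every `0 ≤ ℓ ≤ r(M)`,
`(-1)^{r(M)-ℓ} (d^ℓ/dq^ℓ)(q^{r(M)} Z̃_M(q,v)) |_{q=q₀} > 0`. -/
theorem matZ_derivatives_sign {α : Type*} [DecidableEq α] [Fintype α]
    (M : RankMatroid α) (hloopless : ∀ e : α, M.r {e} = 1)
    (q₀ : ℝ) (hq0 : 0 < q₀) (hq1 : q₀ < 1) (v : α → ℝ)
    (hv : ∀ e : α, -1 - Real.sqrt (1 - q₀) < v e ∧ v e < -q₀)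
    (ℓ : ℕ) (hℓ : ℓ ≤ M.r Finset.univ) :
    0 < (-1 : ℝ) ^ ((M.r Finset.univ : ℤ) - ℓ) *
      iteratedDeriv ℓ (fun q : ℝ => q ^ (M.r Finset.univ) * matZ M q v) q₀ := by
  have hEq : (fun q : ℝ => q ^ (M.r Finset.univ) * matZ M q v)
      =ᶠ[nhds q₀] fun q => (PT M Finset.univ v).eval q := by
    filter_upwards [eventually_gt_nhds hq0] with q hq
    have hq' : q ≠ 0 := ne_of_gt hq
    rw [matZ, PT, Polynomial.eval_finset_sum, Finset.mul_sum]
    refine Finset.sum_congr rfl fun A hA => ?_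
    have hAr : M.r A ≤ M.r Finset.univ := M.mono (Finset.subset_univ A)
    rw [Polynomial.eval_mul, Polynomial.eval_C, Polynomial.eval_pow, Polynomial.eval_X]
    rw [show q ^ (M.r Finset.univ) = q ^ ((M.r Finset.univ : ℤ)) from
      (zpow_natCast q _).symm,
      show q ^ (M.r Finset.univ - M.r A) = q ^ ((M.r Finset.univ - M.r A : ℕ) : ℤ) from
      (zpow_natCast q _).symm]
    have h2 : q ^ ((M.r Finset.univ - M.r A : ℕ) : ℤ)
        = q ^ (M.r Finset.univ : ℤ) * q ^ (-(M.r A : ℤ)) := by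
      rw [← zpow_add₀ hq']
      congr 1
      omega
    rw [h2]
    ring
  have hiter : iteratedDeriv ℓ (fun q : ℝ => q ^ (M.r Finset.univ) * matZ M q v) q₀
      = (derivative^[ℓ] (PT M Finset.univ v)).eval q₀ := by
    rw [hEq.iteratedDeriv_eq ℓ, iteratedDeriv_polynomial]
  rw [hiter,
    show (-1 : ℝ) ^ ((M.r Finset.univ : ℤ) - ℓ)
      = (-1 : ℝ) ^ (M.r Finset.univ - ℓ) from by
        rw [show (M.r Finset.univ : ℤ) - ℓ = ((M.r Finset.univ - ℓ : ℕ) : ℤ) from by omega,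
          zpow_natCast]]
  exact key q₀ hq0 hq1 Finset.univ.card Finset.univ M v rfl
    (fun x _ => hloopless x) (fun x _ => hv x) ℓ hℓ
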